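/- Error in ridge regression due to covariance estimation (deterministic form of Lemma B.4): Let Σ_x ∈ ℝ^{d_x×d_x} and Σ_y ∈ ℝ^{d_y×d_y} be symmetric positive semidefinite, and suppose Σ_yx = Σ_y^{1/2} V Σ_x^{1/2} for some matrix V with ‖V‖ ≤ 1. Let Σ̂_x be symmetric positive semidefinite with ‖Σ̂_x − Σ_x‖ ≤ ζ_xx, let Σ̂_yx satisfy ‖Σ̂_yx − Σ_yx‖ ≤ ζ_xy, and let λ > 0. Then ‖Σ̂_yx (Σ̂_x + λI)^{−1} − Σ_yx (Σ_x + λI)^{−1}‖ ≤ √(λ_max(Σ_y))·ζ_xx·λ^{−3/2} + ζ_xy/λ. -/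

import Mathlib

open scoped Matrix.Norms.L2Operator

/-- The square root of a positive semidefinite matrix (the former Mathlib definition
`Matrix.PosSemidef.sqrt`, removed since). -/
noncomputable def Matrix.PosSemidef.sqrt {n : Type*} [Fintype n] [DecidableEq n]
    {A : Matrix n n ℝ} (hA : A.PosSemidef) : Matrix n n ℝ :=
  hA.1.eigenvectorUnitary.1 * Matrix.diagonal ((↑) ∘ (√·) ∘ hA.1.eigenvalues) *
    (star hA.1.eigenvectorUnitary : Matrix n n ℝ)

/-- The largest eigenvalue of a real symmetric matrix, expressed as the supremum of the
Rayleigh quotient `⟪x, A x⟫` over the unit sphere of Euclidean space. -/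
noncomputable def lamMax {n : Type*} [Fintype n] [DecidableEq n]
    (A : Matrix n n ℝ) : ℝ :=
  ⨆ x : Metric.sphere (0 : EuclideanSpace ℝ n) 1,
    inner (𝕜 := ℝ) (x : EuclideanSpace ℝ n) (Matrix.toEuclideanLin A x)

open Matrix in
theorem Matrix.PosSemidef.sqrt_transpose {n : Type*} [Fintype n] [DecidableEq n]
    {A : Matrix n n ℝ} (hA : A.PosSemidef) : hA.sqrtᵀ = hA.sqrt := by
  simp only [Matrix.PosSemidef.sqrt, Matrix.transpose_mul, Matrix.star_eq_conjTranspose,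
    Matrix.conjTranspose_eq_transpose_of_trivial, Matrix.transpose_transpose,
    Matrix.diagonal_transpose, Matrix.mul_assoc]

theorem Matrix.PosSemidef.sqrt_mul_self {n : Type*} [Fintype n] [DecidableEq n]
    {A : Matrix n n ℝ} (hA : A.PosSemidef) : hA.sqrt * hA.sqrt = A := by
  have hU : (star hA.1.eigenvectorUnitary : Matrix n n ℝ) * hA.1.eigenvectorUnitary.1 = 1 :=
    Unitary.star_mul_self_of_mem hA.1.eigenvectorUnitary.2
  have hD : Matrix.diagonal ((↑) ∘ (√·) ∘ hA.1.eigenvalues) *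
      Matrix.diagonal ((↑) ∘ (√·) ∘ hA.1.eigenvalues) =
      Matrix.diagonal (RCLike.ofReal ∘ hA.1.eigenvalues : n → ℝ) := by
    rw [Matrix.diagonal_mul_diagonal]
    congr 1; funext i
    simp [Real.mul_self_sqrt (hA.eigenvalues_nonneg i)]
  conv_rhs => rw [hA.1.spectral_theorem, Unitary.conjStarAlgAut_apply]
  unfold Matrix.PosSemidef.sqrt
  calc _ = hA.1.eigenvectorUnitary.1 * Matrix.diagonal ((↑) ∘ (√·) ∘ hA.1.eigenvalues) *
      ((star hA.1.eigenvectorUnitary : Matrix n n ℝ) * hA.1.eigenvectorUnitary.1) *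
      Matrix.diagonal ((↑) ∘ (√·) ∘ hA.1.eigenvalues) *
      (star hA.1.eigenvectorUnitary : Matrix n n ℝ) := by simp only [Matrix.mul_assoc]
    _ = _ := by rw [hU, Matrix.mul_one, Matrix.mul_assoc (hA.1.eigenvectorUnitary.1), hD]

namespace RidgeAux

open Matrix

variable {n : Type*} [Fintype n] [DecidableEq n]

lemma dot_eq_inner (x y : n → ℝ) :
    x ⬝ᵥ y = inner (𝕜 := ℝ) ((WithLp.equiv 2 (n → ℝ)).symm x)
      ((WithLp.equiv 2 (n → ℝ)).symm y) := by
  simp [PiLp.inner_apply, dotProduct, RCLike.inner_apply, mul_comm]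

lemma posDef_add_smul {M : Matrix n n ℝ} (hM : M.PosSemidef) {lam : ℝ} (hlam : 0 < lam) :
    (M + lam • 1).PosDef := by
  refine Matrix.PosDef.posSemidef_add hM ?_
  rw [Matrix.smul_one_eq_diagonal]
  exact Matrix.PosDef.diagonal fun _ => hlam

lemma quad_nonneg {M : Matrix n n ℝ} (hM : M.PosSemidef) (v : n → ℝ) :
    0 ≤ v ⬝ᵥ (M *ᵥ v) := by simpa using hM.dotProduct_mulVec_nonneg v

/-- Core vector estimates for `A = M + lam • 1`. -/
lemma vec_bounds {M : Matrix n n ℝ} (hM : M.PosSemidef) {lam : ℝ} (hlam : 0 < lam)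
    (x : EuclideanSpace ℝ n) :
    ‖((WithLp.equiv 2 (n → ℝ)).symm ((M + lam • 1)⁻¹ *ᵥ (WithLp.equiv 2 (n → ℝ)) x) :
        EuclideanSpace ℝ n)‖ ≤ lam⁻¹ * ‖x‖ ∧
    ‖((WithLp.equiv 2 (n → ℝ)).symm (hM.sqrt *ᵥ ((M + lam • 1)⁻¹ *ᵥ (WithLp.equiv 2 (n → ℝ)) x)) :
        EuclideanSpace ℝ n)‖ ≤ (Real.sqrt lam)⁻¹ * ‖x‖ := by
  set A := M + lam • 1 with hAdef
  have hA : A.PosDef := posDef_add_smul hM hlam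
  have hdet : IsUnit A.det := hA.det_pos.ne'.isUnit
  have hAinv : A * A⁻¹ = 1 := Matrix.mul_nonsing_inv A hdet
  set xv : n → ℝ := (WithLp.equiv 2 (n → ℝ)) x with hxv
  set yv : n → ℝ := A⁻¹ *ᵥ xv with hyv
  set zv : n → ℝ := hM.sqrt *ᵥ yv with hzv
  set y : EuclideanSpace ℝ n := (WithLp.equiv 2 (n → ℝ)).symm yv with hy
  set z : EuclideanSpace ℝ n := (WithLp.equiv 2 (n → ℝ)).symm zv with hz
  have hx' : (WithLp.equiv 2 (n → ℝ)).symm xv = x := by simp [hxv]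
  have hAy : A *ᵥ yv = xv := by
    rw [hyv, Matrix.mulVec_mulVec, hAinv, Matrix.one_mulVec]
  have hdotA : yv ⬝ᵥ (A *ᵥ yv) = yv ⬝ᵥ (M *ᵥ yv) + lam * (yv ⬝ᵥ yv) := by
    rw [hAdef, Matrix.add_mulVec, dotProduct_add, Matrix.smul_mulVec,
      Matrix.one_mulVec, dotProduct_smul, smul_eq_mul]
  have hyy : yv ⬝ᵥ yv = ‖y‖ ^ 2 := by
    rw [dot_eq_inner]; exact real_inner_self_eq_norm_sq _
  have hCS : yv ⬝ᵥ xv ≤ ‖y‖ * ‖x‖ := by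
    rw [dot_eq_inner, ← hx']
    exact real_inner_le_norm _ _
  have hMq : 0 ≤ yv ⬝ᵥ (M *ᵥ yv) := quad_nonneg hM yv
  have hkey : lam * ‖y‖ ^ 2 ≤ ‖y‖ * ‖x‖ := by
    have : yv ⬝ᵥ (A *ᵥ yv) = yv ⬝ᵥ xv := by rw [hAy]
    nlinarith [hdotA, hCS, hMq, hyy]
  have hy_le : ‖y‖ ≤ lam⁻¹ * ‖x‖ := by
    rcases eq_or_lt_of_le (norm_nonneg y) with h0 | h0
    · rw [← h0]; positivity
    · rw [le_inv_mul_iff₀ hlam]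
      nlinarith [hkey, h0]
  constructor
  · exact hy_le
  · -- bound on ‖z‖
    have hzz : zv ⬝ᵥ zv = yv ⬝ᵥ (M *ᵥ yv) := by
      have hsym : hM.sqrtᵀ = hM.sqrt := by
        exact hM.sqrt_transpose
      calc zv ⬝ᵥ zv = (hM.sqrt *ᵥ yv) ⬝ᵥ zv := by rw [hzv]
        _ = (yv ᵥ* hM.sqrt) ⬝ᵥ zv := by rw [← Matrix.mulVec_transpose, hsym]
        _ = yv ⬝ᵥ (hM.sqrt *ᵥ zv) := (Matrix.dotProduct_mulVec _ _ _).symm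
        _ = yv ⬝ᵥ (M *ᵥ yv) := by
            rw [hzv, Matrix.mulVec_mulVec, hM.sqrt_mul_self]
    have hz2 : ‖z‖ ^ 2 ≤ lam⁻¹ * ‖x‖ ^ 2 := by
      have h1 : ‖z‖ ^ 2 = zv ⬝ᵥ zv := by
        rw [dot_eq_inner]; exact (real_inner_self_eq_norm_sq _).symm
      have h2 : yv ⬝ᵥ (M *ᵥ yv) ≤ yv ⬝ᵥ xv := by
        have : yv ⬝ᵥ (A *ᵥ yv) = yv ⬝ᵥ xv := by rw [hAy]
        nlinarith [hdotA, hyy, norm_nonneg y]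
      have h3 : yv ⬝ᵥ xv ≤ lam⁻¹ * ‖x‖ ^ 2 := by
        calc yv ⬝ᵥ xv ≤ ‖y‖ * ‖x‖ := hCS
          _ ≤ (lam⁻¹ * ‖x‖) * ‖x‖ := by
              apply mul_le_mul_of_nonneg_right hy_le (norm_nonneg x)
          _ = lam⁻¹ * ‖x‖ ^ 2 := by ring
      rw [h1, hzz]; exact le_trans h2 h3
    have hrhs : lam⁻¹ * ‖x‖ ^ 2 = ((Real.sqrt lam)⁻¹ * ‖x‖) ^ 2 := by
      rw [mul_pow, ← Real.sqrt_inv, Real.sq_sqrt (by positivity)]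
    calc ‖z‖ = Real.sqrt (‖z‖ ^ 2) := (Real.sqrt_sq (norm_nonneg z)).symm
      _ ≤ Real.sqrt (((Real.sqrt lam)⁻¹ * ‖x‖) ^ 2) := by
          apply Real.sqrt_le_sqrt; rw [← hrhs]; exact hz2
      _ = (Real.sqrt lam)⁻¹ * ‖x‖ := Real.sqrt_sq (by positivity)

lemma norm_inv_le {M : Matrix n n ℝ} (hM : M.PosSemidef) {lam : ℝ} (hlam : 0 < lam) :
    ‖(M + lam • 1)⁻¹‖ ≤ lam⁻¹ := by
  rw [Matrix.l2_opNorm_def]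
  exact ContinuousLinearMap.opNorm_le_bound _ (by positivity)
    (fun x => (vec_bounds hM hlam x).1)

lemma norm_sqrt_mul_inv_le {M : Matrix n n ℝ} (hM : M.PosSemidef) {lam : ℝ} (hlam : 0 < lam) :
    ‖hM.sqrt * (M + lam • 1)⁻¹‖ ≤ (Real.sqrt lam)⁻¹ := by
  rw [Matrix.l2_opNorm_def]
  refine ContinuousLinearMap.opNorm_le_bound _ (by positivity) (fun x => ?_)
  have := (vec_bounds hM hlam x).2
  simpa [Matrix.toEuclideanLin_apply, Matrix.mulVec_mulVec] using this

lemma norm_sqrt_le {M : Matrix n n ℝ} (hM : M.PosSemidef) :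
    ‖hM.sqrt‖ ≤ Real.sqrt (lamMax M) := by
  rw [Matrix.l2_opNorm_def]
  refine ContinuousLinearMap.opNorm_le_bound _ (Real.sqrt_nonneg _) (fun x => ?_)
  rcases eq_or_ne x 0 with rfl | hx
  · simp
  · have hxn : (0:ℝ) < ‖x‖ := norm_pos_iff.2 hx
    set u : EuclideanSpace ℝ n := ‖x‖⁻¹ • x with hu
    have hun : ‖u‖ = 1 := by
      rw [hu, norm_smul, norm_inv, norm_norm, inv_mul_cancel₀ hxn.ne']
    -- Rayleigh quotient of u is at most lamMax
    have hbdd : BddAbove (Set.range fun v : Metric.sphere (0 : EuclideanSpace ℝ n) 1 =>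
        inner (𝕜 := ℝ) (v : EuclideanSpace ℝ n) (Matrix.toEuclideanLin M v)) := by
      refine ⟨‖M‖, ?_⟩
      rintro r ⟨v, rfl⟩
      have hv1 : ‖(v : EuclideanSpace ℝ n)‖ = 1 := by
        simpa using mem_sphere_zero_iff_norm.mp v.2
      calc inner (𝕜 := ℝ) (v : EuclideanSpace ℝ n) (Matrix.toEuclideanLin M v)
          ≤ ‖(v : EuclideanSpace ℝ n)‖ * ‖Matrix.toEuclideanLin M v‖ := real_inner_le_norm _ _
        _ ≤ ‖(v : EuclideanSpace ℝ n)‖ * (‖M‖ * ‖(v : EuclideanSpace ℝ n)‖) := by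
            apply mul_le_mul_of_nonneg_left _ (norm_nonneg _)
            exact Matrix.l2_opNorm_mulVec M v
        _ = ‖M‖ := by rw [hv1]; ring
    have hray : inner (𝕜 := ℝ) u (Matrix.toEuclideanLin M u) ≤ lamMax M := by
      have hmem : u ∈ Metric.sphere (0 : EuclideanSpace ℝ n) 1 :=
        mem_sphere_zero_iff_norm.mpr hun
      exact le_ciSup hbdd (⟨u, hmem⟩ : Metric.sphere (0 : EuclideanSpace ℝ n) 1)
    -- quadratic identity : ‖sqrt x‖² = ⟪x, M x⟫
    have hsym : hM.sqrtᵀ = hM.sqrt := by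
      exact hM.sqrt_transpose
    have hquad : ∀ w : EuclideanSpace ℝ n,
        ‖Matrix.toEuclideanLin hM.sqrt w‖ ^ 2 =
          inner (𝕜 := ℝ) w (Matrix.toEuclideanLin M w) := by
      intro w
      set wv : n → ℝ := (WithLp.equiv 2 (n → ℝ)) w with hwv
      have hw' : (WithLp.equiv 2 (n → ℝ)).symm wv = w := by simp [hwv]
      have h1 : ‖Matrix.toEuclideanLin hM.sqrt w‖ ^ 2 =
          (hM.sqrt *ᵥ wv) ⬝ᵥ (hM.sqrt *ᵥ wv) := by
        rw [dot_eq_inner]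
        exact (real_inner_self_eq_norm_sq _).symm
      have h2 : (hM.sqrt *ᵥ wv) ⬝ᵥ (hM.sqrt *ᵥ wv) = wv ⬝ᵥ (M *ᵥ wv) := by
        calc (hM.sqrt *ᵥ wv) ⬝ᵥ (hM.sqrt *ᵥ wv)
            = (wv ᵥ* hM.sqrt) ⬝ᵥ (hM.sqrt *ᵥ wv) := by rw [← Matrix.mulVec_transpose, hsym]
          _ = wv ⬝ᵥ (hM.sqrt *ᵥ (hM.sqrt *ᵥ wv)) := (Matrix.dotProduct_mulVec _ _ _).symm
          _ = wv ⬝ᵥ (M *ᵥ wv) := by rw [Matrix.mulVec_mulVec, hM.sqrt_mul_self]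
      have h3 : wv ⬝ᵥ (M *ᵥ wv) = inner (𝕜 := ℝ) w (Matrix.toEuclideanLin M w) := by
        rw [dot_eq_inner, hw']
        rfl
      rw [h1, h2, h3]
    have hlamnn : 0 ≤ lamMax M := by
      have h0 : (0:ℝ) ≤ inner (𝕜 := ℝ) u (Matrix.toEuclideanLin M u) := by
        rw [← hquad u]; positivity
      linarith
    have hscale : inner (𝕜 := ℝ) x (Matrix.toEuclideanLin M x) ≤ lamMax M * ‖x‖ ^ 2 := by
      have hxu : x = ‖x‖ • u := by
        rw [hu, smul_smul, mul_inv_cancel₀ hxn.ne', one_smul]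
      calc inner (𝕜 := ℝ) x (Matrix.toEuclideanLin M x)
          = ‖x‖ ^ 2 * inner (𝕜 := ℝ) u (Matrix.toEuclideanLin M u) := by
            conv_lhs => rw [hxu]
            rw [_root_.map_smul, real_inner_smul_left, real_inner_smul_right]; ring
        _ ≤ ‖x‖ ^ 2 * lamMax M := by
            apply mul_le_mul_of_nonneg_left hray (by positivity)
        _ = lamMax M * ‖x‖ ^ 2 := by ring
    have : ‖Matrix.toEuclideanLin hM.sqrt x‖ ^ 2 ≤ (Real.sqrt (lamMax M) * ‖x‖) ^ 2 := by
      rw [hquad x, mul_pow, Real.sq_sqrt hlamnn]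
      exact hscale
    calc ‖Matrix.toEuclideanLin hM.sqrt x‖
        = Real.sqrt (‖Matrix.toEuclideanLin hM.sqrt x‖ ^ 2) :=
          (Real.sqrt_sq (norm_nonneg _)).symm
      _ ≤ Real.sqrt ((Real.sqrt (lamMax M) * ‖x‖) ^ 2) := Real.sqrt_le_sqrt this
      _ = Real.sqrt (lamMax M) * ‖x‖ := Real.sqrt_sq (by positivity)

end RidgeAux

/-- **Error in ridge regression due to covariance estimation** (deterministic form of
Lemma B.4). If `Σ_yx = Σ_y^{1/2} V Σ_x^{1/2}` with `‖V‖ ≤ 1`, `‖Σ̂_x − Σ_x‖ ≤ ζ_xx` and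
`‖Σ̂_yx − Σ_yx‖ ≤ ζ_xy`, then
`‖Σ̂_yx(Σ̂_x + λI)⁻¹ − Σ_yx(Σ_x + λI)⁻¹‖ ≤ √(λ_max(Σ_y))·ζ_xx·λ^{−3/2} + ζ_xy/λ`. -/
theorem ridge_error_covariance {dx dy : ℕ}
    (Sx : Matrix (Fin dx) (Fin dx) ℝ) (Sy : Matrix (Fin dy) (Fin dy) ℝ)
    (hSx : Sx.PosSemidef) (hSy : Sy.PosSemidef)
    (V : Matrix (Fin dy) (Fin dx) ℝ) (hV : ‖V‖ ≤ 1)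
    (Syx : Matrix (Fin dy) (Fin dx) ℝ) (hSyx : Syx = hSy.sqrt * V * hSx.sqrt)
    (Sxhat : Matrix (Fin dx) (Fin dx) ℝ) (hSxhat : Sxhat.PosSemidef)
    (Syxhat : Matrix (Fin dy) (Fin dx) ℝ)
    (ζxx ζxy lam : ℝ) (hlam : 0 < lam)
    (hxx : ‖Sxhat - Sx‖ ≤ ζxx) (hxy : ‖Syxhat - Syx‖ ≤ ζxy) :
    ‖Syxhat * (Sxhat + lam • 1)⁻¹ - Syx * (Sx + lam • 1)⁻¹‖ ≤
      Real.sqrt (lamMax Sy) * ζxx * lam ^ (-(3 : ℝ) / 2) + ζxy / lam := by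
  open RidgeAux in
  set A := Sx + lam • 1 with hAdef
  set B := Sxhat + lam • 1 with hBdef
  have hA : A.PosDef := RidgeAux.posDef_add_smul hSx hlam
  have hB : B.PosDef := RidgeAux.posDef_add_smul hSxhat hlam
  have hAinv : A⁻¹ * A = 1 := Matrix.nonsing_inv_mul A hA.det_pos.ne'.isUnit
  have hBinv : B * B⁻¹ = 1 := Matrix.mul_nonsing_inv B hB.det_pos.ne'.isUnit
  have hres : B⁻¹ - A⁻¹ = A⁻¹ * (Sx - Sxhat) * B⁻¹ := by
    have h1 : A - B = Sx - Sxhat := by rw [hAdef, hBdef]; abel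
    calc B⁻¹ - A⁻¹ = (A⁻¹ * A) * B⁻¹ - A⁻¹ * (B * B⁻¹) := by rw [hAinv, hBinv, one_mul, mul_one]
      _ = A⁻¹ * (A - B) * B⁻¹ := by simp only [mul_sub, sub_mul, mul_assoc]
      _ = A⁻¹ * (Sx - Sxhat) * B⁻¹ := by rw [h1]
  have hsplit : Syxhat * B⁻¹ - Syx * A⁻¹ =
      (Syxhat - Syx) * B⁻¹ + hSy.sqrt * (V * ((hSx.sqrt * A⁻¹) * ((Sx - Sxhat) * B⁻¹))) := by
    have h2 : Syx * (B⁻¹ - A⁻¹) =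
        hSy.sqrt * (V * ((hSx.sqrt * A⁻¹) * ((Sx - Sxhat) * B⁻¹))) := by
      rw [hres, hSyx]; simp only [Matrix.mul_assoc]
    calc Syxhat * B⁻¹ - Syx * A⁻¹
        = (Syxhat - Syx) * B⁻¹ + Syx * (B⁻¹ - A⁻¹) := by rw [Matrix.sub_mul, Matrix.mul_sub]; abel
      _ = _ := by rw [h2]
  have hζxx : 0 ≤ ζxx := le_trans (norm_nonneg _) hxx
  have hζxy : 0 ≤ ζxy := le_trans (norm_nonneg _) hxy
  have hBn : ‖(B⁻¹ : Matrix (Fin dx) (Fin dx) ℝ)‖ ≤ lam⁻¹ := RidgeAux.norm_inv_le hSxhat hlam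
  have hsq : ‖hSx.sqrt * A⁻¹‖ ≤ (Real.sqrt lam)⁻¹ := RidgeAux.norm_sqrt_mul_inv_le hSx hlam
  have hsy : ‖hSy.sqrt‖ ≤ Real.sqrt (lamMax Sy) := RidgeAux.norm_sqrt_le hSy
  have hxx' : ‖Sx - Sxhat‖ ≤ ζxx := by rwa [norm_sub_rev]
  have hterm2 : ‖hSy.sqrt * (V * ((hSx.sqrt * A⁻¹) * ((Sx - Sxhat) * B⁻¹)))‖ ≤
      Real.sqrt (lamMax Sy) * (1 * ((Real.sqrt lam)⁻¹ * (ζxx * lam⁻¹))) := by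
    calc ‖hSy.sqrt * (V * ((hSx.sqrt * A⁻¹) * ((Sx - Sxhat) * B⁻¹)))‖
        ≤ ‖hSy.sqrt‖ * (‖V‖ * (‖hSx.sqrt * A⁻¹‖ * (‖Sx - Sxhat‖ * ‖(B⁻¹ : Matrix (Fin dx) (Fin dx) ℝ)‖))) := by
          refine le_trans (Matrix.l2_opNorm_mul _ _) ?_
          apply mul_le_mul_of_nonneg_left _ (norm_nonneg _)
          refine le_trans (Matrix.l2_opNorm_mul _ _) ?_
          apply mul_le_mul_of_nonneg_left _ (norm_nonneg _)
          refine le_trans (Matrix.l2_opNorm_mul _ _) ?_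
          apply mul_le_mul_of_nonneg_left _ (norm_nonneg _)
          exact Matrix.l2_opNorm_mul _ _
      _ ≤ Real.sqrt (lamMax Sy) * (1 * ((Real.sqrt lam)⁻¹ * (ζxx * lam⁻¹))) := by
          gcongr <;> positivity
  have hterm1 : ‖(Syxhat - Syx) * B⁻¹‖ ≤ ζxy * lam⁻¹ := by
    refine le_trans (Matrix.l2_opNorm_mul _ _) ?_
    gcongr
  have hpow : lam ^ (-(3 : ℝ) / 2) = (Real.sqrt lam)⁻¹ * lam⁻¹ := by
    have h1 : lam ^ (-(3 : ℝ) / 2) = lam ^ (-(1:ℝ)/2) * lam ^ (-1:ℝ) := by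
      rw [← Real.rpow_add hlam]; norm_num
    rw [h1, Real.rpow_neg_one, Real.sqrt_eq_rpow, ← Real.rpow_neg hlam.le]
    norm_num
  calc ‖Syxhat * B⁻¹ - Syx * A⁻¹‖
      ≤ ‖(Syxhat - Syx) * B⁻¹‖ +
        ‖hSy.sqrt * (V * ((hSx.sqrt * A⁻¹) * ((Sx - Sxhat) * B⁻¹)))‖ := by
        rw [hsplit]; exact norm_add_le _ _
    _ ≤ ζxy * lam⁻¹ + Real.sqrt (lamMax Sy) * (1 * ((Real.sqrt lam)⁻¹ * (ζxx * lam⁻¹))) :=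
        add_le_add hterm1 hterm2
    _ = Real.sqrt (lamMax Sy) * ζxx * lam ^ (-(3 : ℝ) / 2) + ζxy / lam := by
        rw [hpow, div_eq_mul_inv]; ring
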